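/- Let φ ∈ F and x: ℝ → ℝ continuous with x = φ on (-∞,0]. Then the map u: [0,∞) → F defined by [u(t)](θ) = x(t+θ) is continuous when F carries the topology generated by the seminorms {‖·‖_k} ∪ {p_k}. -/

import Mathlib

open Filter Set

/-- sup_{s ∈ [0, kτ₁]} |b_i φ(s − τ_i)|  (τ₁ = τ 0 with ℕ-indexing). -/
noncomputable def pTerm (b τ : ℕ → ℝ) (φ : ℝ → ℝ) (k i : ℕ) : ℝ :=
  ⨆ s : Set.Icc (0:ℝ) ((k : ℝ) * τ 0), |b i * φ ((s : ℝ) - τ i)|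

/-- The seminorm p_k(φ) = Σ_{i ≥ n(k)} sup_{s ∈ [0,kτ₁]} |b_i φ(s − τ_i)|. -/
noncomputable def pSemi (b τ : ℕ → ℝ) (n : ℕ → ℕ) (φ : ℝ → ℝ) (k : ℕ) : ℝ :=
  ∑' i : ℕ, pTerm b τ φ k (n k + i)

/-- The seminorm ‖φ‖_k = sup_{θ ∈ [−k,0]} |φ(θ)|. -/
noncomputable def normSemi (φ : ℝ → ℝ) (k : ℕ) : ℝ :=
  ⨆ θ : Set.Icc (-(k:ℝ)) (0:ℝ), |φ (θ : ℝ)|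

/-- n(k) is the smallest natural number such that τ_i ≥ kτ₁ for all i ≥ n(k). -/
def nSpec (τ : ℕ → ℝ) (n : ℕ → ℕ) : Prop :=
  ∀ k : ℕ, (∀ i, n k ≤ i → (k : ℝ) * τ 0 ≤ τ i) ∧
    ∀ m : ℕ, (∀ i, m ≤ i → (k : ℝ) * τ 0 ≤ τ i) → n k ≤ m

/-- Membership in the Fréchet space F: φ is continuous on (-∞,0] and
p_k(φ) < ∞ (i.e. the defining series is summable) for every k. -/
def memF (b τ : ℕ → ℝ) (n : ℕ → ℕ) (φ : ℝ → ℝ) : Prop :=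
  ContinuousOn φ (Set.Iic 0) ∧
    ∀ k : ℕ, Summable fun i => pTerm b τ φ k (n k + i)

open Topology

lemma sup_diff_tendsto (x : ℝ → ℝ) (hx : Continuous x) (t₀ c d : ℝ) (hcd : c ≤ d) :
    Tendsto (fun t => ⨆ s : Set.Icc c d, |x (t + (s:ℝ)) - x (t₀ + (s:ℝ))|) (𝓝 t₀) (𝓝 0) := by
  haveI : Nonempty (Set.Icc c d) := ⟨⟨c, le_refl c, hcd⟩⟩
  set u : ℝ → C(Set.Icc c d, ℝ) := fun t =>
    ContinuousMap.mk (fun s => x (t + (s:ℝ)))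
      (hx.comp (continuous_const.add continuous_subtype_val)) with hu
  have hucont : Continuous u := by
    apply ContinuousMap.continuous_of_continuous_uncurry
    exact hx.comp (continuous_fst.add (continuous_subtype_val.comp continuous_snd))
  have h1 : Tendsto (fun t => ‖u t - u t₀‖) (𝓝 t₀) (𝓝 0) := by
    have := (hucont.tendsto t₀).sub (tendsto_const_nhds (x := u t₀))
    rw [sub_self] at this
    simpa using this.norm
  convert h1 using 2 with t
  rw [ContinuousMap.norm_eq_iSup_norm]
  simp [hu, Real.norm_eq_abs]

lemma pTerm_nonneg (b τ : ℕ → ℝ) (φ : ℝ → ℝ) (k i : ℕ) : 0 ≤ pTerm b τ φ k i :=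
  Real.iSup_nonneg fun _ => abs_nonneg _

lemma bddAbove_range_abs_diff (x : ℝ → ℝ) (hx : Continuous x) (t t₀ c d : ℝ) :
    BddAbove (Set.range fun s : Set.Icc c d => |x (t + (s:ℝ)) - x (t₀ + (s:ℝ))|) := by
  obtain ⟨C, hC⟩ := (isCompact_Icc.image_of_continuousOn
    ((((hx.comp (continuous_const.add continuous_id)).sub
      (hx.comp (continuous_const.add continuous_id))).abs.continuousOn) :
      ContinuousOn (fun s : ℝ => |x (t + s) - x (t₀ + s)|) (Set.Icc c d))).bddAbove
  refine ⟨C, ?_⟩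
  rintro y ⟨s, rfl⟩
  exact hC (Set.mem_image_of_mem _ s.2)

lemma pTerm_diff_tendsto (b τ : ℕ → ℝ) (x : ℝ → ℝ) (hx : Continuous x)
    (t₀ : ℝ) (k m : ℕ) (hk : 0 ≤ (k:ℝ) * τ 0) :
    Tendsto (fun t => pTerm b τ (fun θ => x (t + θ) - x (t₀ + θ)) k m) (𝓝 t₀) (𝓝 0) := by
  set c := -(τ m); set d := (k:ℝ) * τ 0 - τ m
  have hcd : c ≤ d := by simp [c, d]; linarith
  set G : ℝ → ℝ := fun t => ⨆ s : Set.Icc c d, |x (t + (s:ℝ)) - x (t₀ + (s:ℝ))| with hG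
  have hGnn : ∀ t, 0 ≤ G t := fun t => Real.iSup_nonneg fun _ => abs_nonneg _
  have hbound : ∀ t, pTerm b τ (fun θ => x (t + θ) - x (t₀ + θ)) k m ≤ |b m| * G t := by
    intro t
    apply Real.iSup_le _ (mul_nonneg (abs_nonneg _) (hGnn t))
    rintro ⟨s, hs0, hs1⟩
    have hmem : s - τ m ∈ Set.Icc c d := ⟨by simp [c]; linarith, by simp [d]; linarith⟩
    have hle : |x (t + (s - τ m)) - x (t₀ + (s - τ m))| ≤ G t :=
      le_ciSup (bddAbove_range_abs_diff x hx t t₀ c d) (⟨s - τ m, hmem⟩ : Set.Icc c d)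
    calc |b m * ((fun θ => x (t + θ) - x (t₀ + θ)) ((⟨s, hs0, hs1⟩ : Set.Icc 0 ((k:ℝ)* τ 0)) - τ m))|
        = |b m| * |x (t + (s - τ m)) - x (t₀ + (s - τ m))| := by rw [abs_mul]
      _ ≤ |b m| * G t := mul_le_mul_of_nonneg_left hle (abs_nonneg _)
  have hGt : Tendsto (fun t => |b m| * G t) (𝓝 t₀) (𝓝 0) := by
    have := (sup_diff_tendsto x hx t₀ c d hcd).const_mul |b m|
    simpa using this
  exact squeeze_zero (fun t => pTerm_nonneg b τ _ k m) hbound hGt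

lemma bddAbove_pTerm_range (b τ : ℕ → ℝ) (φ : ℝ → ℝ)
    (hφc : ContinuousOn φ (Set.Iic 0)) (K m : ℕ) (hm : (K:ℝ) * τ 0 ≤ τ m) :
    BddAbove (Set.range fun s : Set.Icc (0:ℝ) ((K:ℝ) * τ 0) => |b m * φ ((s:ℝ) - τ m)|) := by
  have hco : ContinuousOn (fun s : ℝ => |b m * φ (s - τ m)|)
      (Set.Icc (0:ℝ) ((K:ℝ) * τ 0)) := by
    apply ContinuousOn.abs
    apply ContinuousOn.mul continuousOn_const
    apply hφc.comp (continuousOn_id.sub continuousOn_const)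
    intro s hs
    simp only [Set.mem_Iic]
    have := hs.2
    simp at this ⊢
    linarith
  obtain ⟨C, hC⟩ := (isCompact_Icc.image_of_continuousOn hco).bddAbove
  refine ⟨C, ?_⟩
  rintro y ⟨s, rfl⟩
  exact hC (Set.mem_image_of_mem _ s.2)

lemma le_pTerm (b τ : ℕ → ℝ) (φ : ℝ → ℝ)
    (hφc : ContinuousOn φ (Set.Iic 0)) (K m : ℕ) (hm : (K:ℝ) * τ 0 ≤ τ m)
    (s : ℝ) (hs : s ∈ Set.Icc (0:ℝ) ((K:ℝ) * τ 0)) :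
    |b m * φ (s - τ m)| ≤ pTerm b τ φ K m :=
  le_ciSup (bddAbove_pTerm_range b τ φ hφc K m hm) (⟨s, hs⟩ : Set.Icc (0:ℝ) ((K:ℝ) * τ 0))

/-- For φ ∈ F and x : ℝ → ℝ continuous with x = φ on (-∞,0],
the map u : [0,∞) → F, u(t) = x(t + ·), is continuous for the topology of F
generated by the seminorms {‖·‖_k} ∪ {p_k}: every seminorm of u(t) − u(t₀)
tends to 0 as t → t₀ in [0,∞). -/
theorem history_segment_continuous (b τ : ℕ → ℝ) (n : ℕ → ℕ)
    (hτ : StrictMono τ) (hτpos : ∀ i, 0 < τ i)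
    (hτtop : Tendsto τ atTop atTop) (hn : nSpec τ n)
    (φ : ℝ → ℝ) (hφ : memF b τ n φ)
    (x : ℝ → ℝ) (hxc : Continuous x) (hxφ : ∀ θ ≤ (0:ℝ), x θ = φ θ)
    (t₀ : ℝ) (ht₀ : 0 ≤ t₀) (k : ℕ) :
    Tendsto (fun t => normSemi (fun θ => x (t + θ) - x (t₀ + θ)) k)
      (𝓝[Set.Ici (0:ℝ)] t₀) (nhds 0) ∧
    Tendsto (fun t => pSemi b τ n (fun θ => x (t + θ) - x (t₀ + θ)) k)
      (𝓝[Set.Ici (0:ℝ)] t₀) (nhds 0) := by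
  have hτ0 : 0 < τ 0 := hτpos 0
  have hk0 : 0 ≤ (k:ℝ) * τ 0 := mul_nonneg (Nat.cast_nonneg k) hτ0.le
  constructor
  · have h := sup_diff_tendsto x hxc t₀ (-(k:ℝ)) 0 (neg_nonpos.mpr (Nat.cast_nonneg k))
    exact h.mono_left nhdsWithin_le_nhds
  -- part 2
  set j := ⌈(t₀ + 1) / τ 0⌉₊ with hj
  set K := k + j with hK
  have hjτ : t₀ + 1 ≤ (j:ℝ) * τ 0 := by
    have := Nat.le_ceil ((t₀ + 1) / τ 0)
    rw [div_le_iff₀ hτ0] at this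
    linarith
  have hKτ : t₀ + 1 + (k:ℝ) * τ 0 ≤ (K:ℝ) * τ 0 := by
    have : ((K:ℕ):ℝ) = (k:ℝ) + (j:ℝ) := by push_cast [hK]; ring
    rw [this, add_mul]; linarith
  have hnkK : n k ≤ n K := by
    refine (hn k).2 (n K) (fun i hi => ?_)
    refine le_trans ?_ ((hn K).1 i hi)
    have : (k:ℝ) ≤ (K:ℝ) := by exact_mod_cast Nat.le_add_right k j
    nlinarith
  set d := n K - n k with hd
  have hnkd : n k + d = n K := by omega
  -- bound for small indices
  obtain ⟨C, hC⟩ := (isCompact_Icc.image_of_continuousOn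
    (hxc.abs.continuousOn : ContinuousOn (fun r : ℝ => |x r|)
      (Set.Icc (-(τ (n K))) (t₀ + 1 + (k:ℝ) * τ 0)))).bddAbove
  have hCmem : ∀ r, -(τ (n K)) ≤ r → r ≤ t₀ + 1 + (k:ℝ) * τ 0 → |x r| ≤ C := fun r h1 h2 =>
    hC (Set.mem_image_of_mem _ ⟨h1, h2⟩)
  set g : ℕ → ℝ := fun m => pTerm b τ φ K m with hg
  set bound : ℕ → ℝ := fun i => if n k + i < n K then 2 * |b (n k + i)| * C else 2 * g (n k + i)
    with hbnd
  have hsum : Summable bound := by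
    rw [← summable_nat_add_iff d]
    have : (fun i => bound (i + d)) = fun i => 2 * g (n K + i) := by
      funext i
      have h1 : ¬ (n k + (i + d) < n K) := by omega
      have h2 : n k + (i + d) = n K + i := by omega
      simp only [hbnd, h2]
      rw [if_neg (by omega)]
    rw [this]
    exact (hφ.2 K).mul_left 2
  have hab : ∀ i : ℕ, Tendsto
      (fun t => pTerm b τ (fun θ => x (t + θ) - x (t₀ + θ)) k (n k + i))
      (𝓝[Set.Ici (0:ℝ)] t₀) (𝓝 0) := fun i =>
    (pTerm_diff_tendsto b τ x hxc t₀ k (n k + i) hk0).mono_left nhdsWithin_le_nhds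
  have hev : ∀ᶠ t in 𝓝[Set.Ici (0:ℝ)] t₀, t ∈ Set.Icc (0:ℝ) (t₀ + 1) := by
    have h1 : ∀ᶠ t in 𝓝[Set.Ici (0:ℝ)] t₀, t ≤ t₀ + 1 :=
      eventually_nhdsWithin_of_eventually_nhds
        (Filter.Tendsto.eventually_le_const (by linarith) tendsto_id)
    have h2 : ∀ᶠ t in 𝓝[Set.Ici (0:ℝ)] t₀, t ∈ Set.Ici (0:ℝ) :=
      eventually_mem_nhdsWithin
    filter_upwards [h1, h2] with t ha hb using ⟨hb, ha⟩
  have h_bound : ∀ᶠ t in 𝓝[Set.Ici (0:ℝ)] t₀, ∀ i : ℕ,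
      ‖pTerm b τ (fun θ => x (t + θ) - x (t₀ + θ)) k (n k + i)‖ ≤ bound i := by
    filter_upwards [hev] with t ht i
    obtain ⟨ht0, ht1⟩ := ht
    rw [Real.norm_eq_abs, abs_of_nonneg (pTerm_nonneg _ _ _ _ _)]
    set m := n k + i with hm
    by_cases hcase : m < n K
    · -- small index: use the sup bound C
      have hτm : τ m ≤ τ (n K) := (hτ.le_iff_le).2 (le_of_lt hcase)
      have hbound' : pTerm b τ (fun θ => x (t + θ) - x (t₀ + θ)) k m ≤ 2 * |b m| * C := by
        apply Real.iSup_le _ ?_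
        · rintro ⟨s, hs0, hs1⟩
          have e1 : |x (t + (s - τ m))| ≤ C := hCmem _ (by linarith [(hτpos m).le]) (by linarith [hτpos m])
          have e2 : |x (t₀ + (s - τ m))| ≤ C := hCmem _ (by linarith [(hτpos m).le]) (by linarith [hτpos m])
          have : |x (t + (s - τ m)) - x (t₀ + (s - τ m))| ≤ 2 * C := by
            calc |x (t + (s - τ m)) - x (t₀ + (s - τ m))|
                ≤ |x (t + (s - τ m))| + |x (t₀ + (s - τ m))| := abs_sub _ _
              _ ≤ 2 * C := by linarith
          calc |b m * ((fun θ => x (t + θ) - x (t₀ + θ)) (s - τ m))|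
              = |b m| * |x (t + (s - τ m)) - x (t₀ + (s - τ m))| := by
                simp only [abs_mul]
            _ ≤ |b m| * (2 * C) := mul_le_mul_of_nonneg_left this (abs_nonneg _)
            _ = 2 * |b m| * C := by ring
        · have hC0 : 0 ≤ C := le_trans (abs_nonneg _) (hCmem 0 (by linarith [(hτpos (n K)).le]) (by linarith))
          positivity
      have hc' : n k + i < n K := hcase
      simp only [hbnd]; rw [if_pos hc']; exact hbound'
    · -- large index: compare with pTerm of φ at level K
      push_neg at hcase
      have hτm : (K:ℝ) * τ 0 ≤ τ m := (hn K).1 m hcase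
      have hbound' : pTerm b τ (fun θ => x (t + θ) - x (t₀ + θ)) k m ≤ 2 * g m := by
        have hgm : 0 ≤ g m := pTerm_nonneg b τ φ K m
        apply Real.iSup_le _ (by linarith)
        rintro ⟨s, hs0, hs1⟩
        have harg1 : t + (s - τ m) ≤ 0 := by linarith
        have harg2 : t₀ + (s - τ m) ≤ 0 := by linarith
        have hx1 : x (t + (s - τ m)) = φ ((t + s) - τ m) := by
          rw [hxφ _ harg1]; ring_nf
        have hx2 : x (t₀ + (s - τ m)) = φ ((t₀ + s) - τ m) := by
          rw [hxφ _ harg2]; ring_nf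
        have e1 : |b m * φ ((t + s) - τ m)| ≤ g m :=
          le_pTerm b τ φ hφ.1 K m hτm (t + s) ⟨by linarith, by linarith⟩
        have e2 : |b m * φ ((t₀ + s) - τ m)| ≤ g m :=
          le_pTerm b τ φ hφ.1 K m hτm (t₀ + s) ⟨by linarith, by linarith⟩
        calc |b m * ((fun θ => x (t + θ) - x (t₀ + θ)) (s - τ m))|
            = |b m * φ ((t + s) - τ m) - b m * φ ((t₀ + s) - τ m)| := by
              simp only [hx1, hx2, mul_sub]
          _ ≤ |b m * φ ((t + s) - τ m)| + |b m * φ ((t₀ + s) - τ m)| := abs_sub _ _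
          _ ≤ 2 * g m := by linarith
      have hc' : ¬ (n k + i < n K) := not_lt.2 hcase
      simp only [hbnd]; rw [if_neg hc']; exact hbound'
  have := tendsto_tsum_of_dominated_convergence hsum hab h_bound
  simpa only [pSemi, tsum_zero] using this
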